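/- Let P be a finite set of points in F² (with F infinite), p, q ∈ P distinct, v ∈ ℤ_{≥0}^P, and n ≥ 1. With T(v,n) the space of polynomials of degree ≤ n vanishing to order ≥ v_r at each r ∈ P, and b_p(v,n) = dim T(v,n) − dim T(v+e_p,n), one has b_p(v + e_q, n) ≥ b_p(v, n−1). -/

import Mathlib

open MvPolynomial

variable {F : Type*} [Field F]

/-- The subspace of polynomials in `F[x,y]` vanishing to order at least `m` at `p`:
all monomials of total degree `< m` in the Taylor expansion around `p` have zero
coefficient. -/
noncomputable def vanishingSubmodule (p : Fin 2 → F) (m : ℕ) :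
    Submodule F (MvPolynomial (Fin 2) F) :=
  ⨅ (ω : Fin 2 →₀ ℕ) (_ : (ω.sum fun _ e => e) < m),
    LinearMap.ker ((lcoeff F ω).comp
      (aeval (fun i => X i + C (p i)) :
        MvPolynomial (Fin 2) F →ₐ[F] MvPolynomial (Fin 2) F).toLinearMap)

/-- `T(v, n)`: the subspace of polynomials of degree at most `n` vanishing to order at
least `v p` at each point `p ∈ P`. -/
noncomputable def T (P : Finset (Fin 2 → F)) (v : (Fin 2 → F) → ℕ) (n : ℕ) :
    Submodule F (MvPolynomial (Fin 2) F) :=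
  restrictTotalDegree (Fin 2) F n ⊓ ⨅ p ∈ P, vanishingSubmodule p (v p)

/-- `b_p(v, n) = dim T(v,n) − dim T(v + e_p, n)`. -/
noncomputable def b [DecidableEq (Fin 2 → F)] (P : Finset (Fin 2 → F)) (p : Fin 2 → F)
    (v : (Fin 2 → F) → ℕ) (n : ℕ) : ℕ :=
  Module.finrank F (T P v n) - Module.finrank F (T P (Function.update v p (v p + 1)) n)

/-! ### Auxiliary lemmas -/

lemma deg_add (a c : Fin 2 →₀ ℕ) :
    ((a + c).sum fun _ e => e) = (a.sum fun _ e => e) + (c.sum fun _ e => e) :=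
  Finsupp.sum_add_index' (fun _ => rfl) (fun _ _ _ => rfl)

lemma deg_eq (ω : Fin 2 →₀ ℕ) : (ω.sum fun _ e => e) = ω 0 + ω 1 := by
  rw [Finsupp.sum_fintype _ _ (fun _ => rfl)]
  exact Fin.sum_univ_two _

lemma mem_vanishingSubmodule {p : Fin 2 → F} {m : ℕ} {f : MvPolynomial (Fin 2) F} :
    f ∈ vanishingSubmodule p m ↔ ∀ ω : Fin 2 →₀ ℕ, (ω.sum fun _ e => e) < m →
      coeff ω (aeval (fun i => X i + C (p i)) f) = 0 := by
  simp [vanishingSubmodule, Submodule.mem_iInf, LinearMap.mem_ker, lcoeff_apply]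

/-- Products add vanishing orders (one-sided inequality suffices). -/
lemma mul_mem_vanishing {p : Fin 2 → F} {m k j : ℕ} {f g : MvPolynomial (Fin 2) F}
    (hg : g ∈ vanishingSubmodule p k) (hf : f ∈ vanishingSubmodule p m)
    (hj : j ≤ k + m) : g * f ∈ vanishingSubmodule p j := by
  classical
  rw [mem_vanishingSubmodule] at *
  intro ω hω
  have hω' : (ω.sum fun _ e => e) < k + m := lt_of_lt_of_le hω hj
  rw [map_mul, coeff_mul]
  apply Finset.sum_eq_zero
  rintro ⟨a, c⟩ hac
  rw [Finset.HasAntidiagonal.mem_antidiagonal] at hac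
  have hsum : (a.sum fun _ e => e) + (c.sum fun _ e => e) = (ω.sum fun _ e => e) := by
    rw [← deg_add, hac]
  by_cases h : (c.sum fun _ e => e) < m
  · rw [hf c h, mul_zero]
  · rw [hg a (by omega), zero_mul]

lemma vanishing_antitone (p : Fin 2 → F) {m k : ℕ} (h : m ≤ k) :
    vanishingSubmodule p k ≤ vanishingSubmodule p m := by
  intro f hf
  rw [mem_vanishingSubmodule] at *
  exact fun ω hω => hf ω (lt_of_lt_of_le hω h)

lemma mem_T {P : Finset (Fin 2 → F)} {v : (Fin 2 → F) → ℕ} {n : ℕ}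
    {f : MvPolynomial (Fin 2) F} :
    f ∈ T P v n ↔ f.totalDegree ≤ n ∧ ∀ r ∈ P, f ∈ vanishingSubmodule r (v r) := by
  simp [T, Submodule.mem_inf, Submodule.mem_iInf, mem_restrictTotalDegree]

lemma T_antitone {P : Finset (Fin 2 → F)} {v w : (Fin 2 → F) → ℕ} {n : ℕ}
    (h : ∀ r, v r ≤ w r) : T P w n ≤ T P v n := by
  intro f hf
  rw [mem_T] at *
  exact ⟨hf.1, fun r hr => vanishing_antitone r (h r) (hf.2 r hr)⟩

instance T_finite (P : Finset (Fin 2 → F)) (v : (Fin 2 → F) → ℕ) (n : ℕ) :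
    Module.Finite F (T P v n) :=
  Submodule.finiteDimensional_of_le (inf_le_left : T P v n ≤ restrictTotalDegree (Fin 2) F n)

/-- The key cancellation: if `h` vanishes to order `m` at the origin and `(X i + C c) * h`
vanishes to order `m + 1`, with `c ≠ 0`, then `h` vanishes to order `m + 1`. -/
lemma key_cancel {i : Fin 2} {c : F} (hc : c ≠ 0) {h : MvPolynomial (Fin 2) F} {m : ℕ}
    (h1 : ∀ ω : Fin 2 →₀ ℕ, (ω.sum fun _ e => e) < m → coeff ω h = 0)
    (h2 : ∀ ω : Fin 2 →₀ ℕ, (ω.sum fun _ e => e) < m + 1 → coeff ω ((X i + C c) * h) = 0) :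
    ∀ ω : Fin 2 →₀ ℕ, (ω.sum fun _ e => e) < m + 1 → coeff ω h = 0 := by
  classical
  intro ω hω
  have h2' := h2 ω hω
  rw [add_mul, coeff_add, coeff_C_mul, mul_comm (X i) h, coeff_mul_X'] at h2'
  by_cases hi : i ∈ ω.support
  · rw [if_pos hi] at h2'
    have hωi : ω i ≠ 0 := Finsupp.mem_support_iff.mp hi
    have hdeg : ((ω - Finsupp.single i 1).sum fun _ e => e) < m := by
      rw [deg_eq, Finsupp.tsub_apply, Finsupp.tsub_apply]
      rw [deg_eq] at hω
      fin_cases i <;> simp only [Finsupp.single_apply, Fin.isValue] at hωi ⊢ <;>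
        simp_all <;> omega
    rw [h1 _ hdeg, zero_add] at h2'
    exact (mul_eq_zero.mp h2').resolve_left hc
  · rw [if_neg hi, zero_add] at h2'
    exact (mul_eq_zero.mp h2').resolve_left hc

/-- Abstract dimension-difference comparison through a linear map. -/
lemma finrank_sub_le_of_map {M : Type*} [AddCommGroup M] [Module F M]
    {A A' B B' : Submodule F M} (hA : A' ≤ A) (hB : B' ≤ B)
    [Module.Finite F A] [Module.Finite F B]
    (φ : M →ₗ[F] M) (hφ : ∀ x ∈ A, φ x ∈ B)
    (hiff : ∀ x ∈ A, (φ x ∈ B' ↔ x ∈ A')) :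
    Module.finrank F A - Module.finrank F A' ≤
      Module.finrank F B - Module.finrank F B' := by
  set B'' := B'.comap B.subtype with hB''
  set A'' := A'.comap A.subtype with hA''
  let ψ : A →ₗ[F] B ⧸ B'' := B''.mkQ ∘ₗ φ.restrict hφ
  have hker : LinearMap.ker ψ = A'' := by
    ext x
    simp only [ψ, LinearMap.mem_ker, LinearMap.coe_comp, Function.comp_apply,
      Submodule.mkQ_apply, Submodule.Quotient.mk_eq_zero, hB'', hA'', Submodule.mem_comap,
      LinearMap.restrict_apply, Submodule.coe_subtype]
    exact hiff x x.2
  have h1 : Module.finrank F (LinearMap.range ψ) + Module.finrank F A'' =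
      Module.finrank F A := by
    rw [← hker]; exact LinearMap.finrank_range_add_finrank_ker ψ
  have h2 : Module.finrank F (B ⧸ B'') + Module.finrank F B'' = Module.finrank F B :=
    Submodule.finrank_quotient_add_finrank B''
  have h3 : Module.finrank F (LinearMap.range ψ) ≤ Module.finrank F (B ⧸ B'') :=
    (LinearMap.range ψ).finrank_le
  have e1 : Module.finrank F A'' = Module.finrank F A' :=
    (Submodule.comapSubtypeEquivOfLe hA).finrank_eq
  have e2 : Module.finrank F B'' = Module.finrank F B' :=
    (Submodule.comapSubtypeEquivOfLe hB).finrank_eq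
  omega

/-- For distinct `p, q ∈ P` (over an infinite field), increasing the required vanishing
order at `q` by one does not decrease the count of new conditions at `p`, at the cost of
one in the degree: `b_p(v + e_q, n) ≥ b_p(v, n−1)`. -/
theorem b_add_eq_ge [Infinite F] [DecidableEq (Fin 2 → F)]
    (P : Finset (Fin 2 → F)) (p q : Fin 2 → F) (hp : p ∈ P) (hq : q ∈ P) (hpq : p ≠ q)
    (v : (Fin 2 → F) → ℕ) (n : ℕ) (hn : 1 ≤ n) :
    b P p v (n - 1) ≤ b P p (Function.update v q (v q + 1)) n := by
  classical
  obtain ⟨i, hi⟩ := Function.ne_iff.mp hpq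
  set ℓ : MvPolynomial (Fin 2) F := X i - C (q i) with hℓ
  set w : (Fin 2 → F) → ℕ := Function.update v q (v q + 1) with hw
  -- total degree of ℓ is at most 1
  have hℓdeg : ℓ.totalDegree ≤ 1 := by
    rw [hℓ, sub_eq_add_neg, ← map_neg C]
    refine le_trans (totalDegree_add _ _) ?_
    simp [totalDegree_X, totalDegree_C]
  -- ℓ vanishes to order 1 at q
  have hℓq : ∀ r : Fin 2 → F, ℓ ∈ vanishingSubmodule r 1 ∨ True := fun _ => Or.inr trivial
  have haevalℓ : ∀ r : Fin 2 → F,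
      aeval (fun j => X j + C (r j)) ℓ = X i + C (r i - q i) := by
    intro r
    rw [hℓ, map_sub, aeval_X, aeval_C, algebraMap_eq, map_sub C]
    ring
  have hℓq1 : ℓ ∈ vanishingSubmodule q 1 := by
    rw [mem_vanishingSubmodule]
    intro ω hω
    rw [haevalℓ q, sub_self, map_zero, add_zero, coeff_X']
    have : Finsupp.single i 1 ≠ ω := by
      intro hsingle
      rw [← hsingle, deg_eq] at hω
      fin_cases i <;> simp [Finsupp.single_apply] at hω
    rw [if_neg this]
  have hℓ0 : ∀ r : Fin 2 → F, ℓ ∈ vanishingSubmodule r 0 := by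
    intro r; rw [mem_vanishingSubmodule]; omega
  -- the multiplication map
  set φ : MvPolynomial (Fin 2) F →ₗ[F] MvPolynomial (Fin 2) F := LinearMap.mulLeft F ℓ with hφdef
  have hφapply : ∀ f, φ f = ℓ * f := fun _ => rfl
  -- main inequalities on submodules
  have hA : T P (Function.update v p (v p + 1)) (n - 1) ≤ T P v (n - 1) := by
    apply T_antitone
    intro r
    rcases eq_or_ne r p with rfl | hr
    · simp
    · simp [Function.update_apply, hr]
  have hB : T P (Function.update w p (w p + 1)) n ≤ T P w n := by
    apply T_antitone
    intro r
    rcases eq_or_ne r p with rfl | hr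
    · simp
    · simp [Function.update_apply, hr]
  -- φ maps T P v (n-1) into T P w n
  have hdegmul : ∀ f : MvPolynomial (Fin 2) F, f.totalDegree ≤ n - 1 →
      (ℓ * f).totalDegree ≤ n := by
    intro f hf
    refine le_trans (totalDegree_mul _ _) ?_
    omega
  have hφmap : ∀ f ∈ T P v (n - 1), φ f ∈ T P w n := by
    intro f hf
    rw [mem_T] at hf ⊢
    refine ⟨by rw [hφapply]; exact hdegmul f hf.1, fun r hr => ?_⟩
    rw [hφapply]
    rcases eq_or_ne r q with rfl | hr'
    · exact mul_mem_vanishing hℓq1 (hf.2 r hr)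
        (by rw [hw, Function.update_self]; omega)
    · exact mul_mem_vanishing (hℓ0 r) (hf.2 r hr)
        (by rw [hw, Function.update_of_ne hr']; omega)
  -- the iff condition
  have hiff : ∀ f ∈ T P v (n - 1),
      (φ f ∈ T P (Function.update w p (w p + 1)) n ↔
        f ∈ T P (Function.update v p (v p + 1)) (n - 1)) := by
    intro f hf
    have hfT := hf
    rw [mem_T] at hfT
    constructor
    · -- backward: extract the extra vanishing at p
      intro hmem
      rw [mem_T] at hmem ⊢
      refine ⟨hfT.1, fun r hr => ?_⟩
      rcases eq_or_ne r p with rfl | hr'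
      · rw [Function.update_self]
        -- use key_cancel
        have hfp : f ∈ vanishingSubmodule r (v r) := hfT.2 r hr
        have hmulp : φ f ∈ vanishingSubmodule r (v r + 1) := by
          have := hmem.2 r hr
          rwa [Function.update_self, hw, Function.update_of_ne hpq] at this
        rw [mem_vanishingSubmodule] at hfp hmulp ⊢
        rw [hφapply] at hmulp
        have hmul' : ∀ ω : Fin 2 →₀ ℕ, (ω.sum fun _ e => e) < v r + 1 →
            coeff ω ((X i + C (r i - q i)) * aeval (fun j => X j + C (r j)) f) = 0 := by
          intro ω hω
          have := hmulp ω hω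
          rwa [map_mul, haevalℓ r] at this
        exact key_cancel (sub_ne_zero_of_ne hi) hfp hmul'
      · rw [Function.update_of_ne hr']
        exact hfT.2 r hr
    · -- forward: multiply preserves everything
      intro hmem
      rw [mem_T] at hmem ⊢
      refine ⟨by rw [hφapply]; exact hdegmul f hmem.1, fun r hr => ?_⟩
      rw [hφapply]
      rcases eq_or_ne r p with rfl | hrp
      · have hfp : f ∈ vanishingSubmodule r (v r + 1) := by
          have := hmem.2 r hr
          rwa [Function.update_self] at this
        exact mul_mem_vanishing (hℓ0 r) hfp
          (by rw [Function.update_self, hw, Function.update_of_ne hpq]; omega)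
      · have hfr : f ∈ vanishingSubmodule r (v r) := by
          have := hmem.2 r hr
          rwa [Function.update_of_ne hrp] at this
        rcases eq_or_ne r q with rfl | hrq
        · exact mul_mem_vanishing hℓq1 hfr
            (by rw [Function.update_of_ne hrp, hw, Function.update_self]; omega)
        · exact mul_mem_vanishing (hℓ0 r) hfr
            (by rw [Function.update_of_ne hrp, hw, Function.update_of_ne hrq]; omega)
  -- conclude with the abstract lemma
  unfold b
  exact finrank_sub_le_of_map hA hB φ hφmap hiff
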